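/- Let G be a finite graph that is the edge-disjoint union of cycles C_1, ..., C_k, each of length four, and a graph E, such that for every choice of halving each C_i (deleting two opposite edges of each four-cycle), the resulting subgraph is a two-factor of G (every vertex has degree exactly two). If G is connected, then G has a Hamiltonian cycle. -/

import Mathlib

open SimpleGraph

namespace LemmaTwoAux

variable {V : Type*}

/-- Evenness of the cardinality of a finset admitting a fixed-point-free involution. -/
lemma even_card_of_invol {α : Type*} [DecidableEq α] (s : Finset α) (f : α → α)
    (hmem : ∀ x ∈ s, f x ∈ s) (hinv : ∀ x ∈ s, f (f x) = x) (hne : ∀ x ∈ s, f x ≠ x) :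
    Even s.card := by
  classical
  suffices h : ∀ n (s : Finset α), (∀ x ∈ s, f x ∈ s) → (∀ x ∈ s, f (f x) = x) →
      (∀ x ∈ s, f x ≠ x) → s.card = n → Even s.card from
    h s.card s hmem hinv hne rfl
  clear hmem hinv hne s
  intro n
  induction n using Nat.strong_induction_on with
  | _ n ih =>
    intro s hmem hinv hne hn
    rcases s.eq_empty_or_nonempty with rfl | ⟨x, hx⟩
    · simp
    · have hfx : f x ∈ s := hmem x hx
      have hfxx : f x ≠ x := hne x hx
      set t := (s.erase x).erase (f x) with ht
      have htsub : t ⊆ s := (Finset.erase_subset _ _).trans (Finset.erase_subset _ _)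
      have hmemt : ∀ y ∈ t, y ∈ s ∧ y ≠ x ∧ y ≠ f x := by
        intro y hy
        refine ⟨htsub hy, ?_, ?_⟩
        · exact Finset.ne_of_mem_erase (Finset.mem_of_mem_erase hy)
        · exact Finset.ne_of_mem_erase hy
      have hcard : t.card + 2 = s.card := by
        rw [ht, Finset.card_erase_of_mem, Finset.card_erase_of_mem hx]
        · have h1 : 1 ≤ s.card := Finset.card_pos.mpr ⟨x, hx⟩
          have h2 : 2 ≤ s.card := Finset.one_lt_card.mpr ⟨x, hx, f x, hfx, hfxx.symm⟩
          omega
        · exact Finset.mem_erase.mpr ⟨hfxx, hfx⟩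
      have hme : ∀ y ∈ t, f y ∈ t := by
        intro y hy
        obtain ⟨hys, hyx, hyfx⟩ := hmemt y hy
        refine Finset.mem_erase.mpr ⟨?_, Finset.mem_erase.mpr ⟨?_, hmem y hys⟩⟩
        · intro h; apply hyx; rw [← hinv y hys, h, hinv x hx]
        · intro h; apply hyfx; rw [← hinv y hys, h]
      have : Even t.card := by
        refine ih t.card (by omega) t hme ?_ ?_ rfl
        · exact fun y hy => hinv y (htsub hy)
        · exact fun y hy => hne y (htsub hy)
      obtain ⟨r, hr⟩ := this
      exact ⟨r + 1, by omega⟩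

/-- In a finite graph where every vertex has exactly two neighbours, no edge is a bridge. -/
lemma nobridge [Fintype V] (H : SimpleGraph V)
    (hreg : ∀ v, (H.neighborSet v).ncard = 2) {u v : V} (huv : H.Adj u v) :
    (H \ fromEdgeSet {s(u, v)}).Reachable u v := by
  classical
  by_contra hnr
  set H' := H \ fromEdgeSet {s(u, v)} with hH'
  have hadj' : ∀ x y, H'.Adj x y ↔ H.Adj x y ∧ s(x, y) ≠ s(u, v) := by
    intro x y
    rw [hH']
    simp only [sdiff_adj, fromEdgeSet_adj, Set.mem_singleton_iff, not_and, not_not]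
    constructor
    · rintro ⟨h1, h2⟩
      exact ⟨h1, fun h => h1.ne (h2 h)⟩
    · rintro ⟨h1, h2⟩
      exact ⟨h1, fun h => absurd h h2⟩
  set S : Finset V := Finset.univ.filter (fun w => H'.Reachable u w) with hS
  have huS : u ∈ S := by
    simp only [hS, Finset.mem_filter, Finset.mem_univ, true_and]
    exact Reachable.refl u
  have hvS : v ∉ S := by simp [hS]; exact hnr
  have hclosed : ∀ x y, x ∈ S → H'.Adj x y → y ∈ S := by
    intro x y hx hxy
    simp only [hS, Finset.mem_filter, Finset.mem_univ, true_and] at hx ⊢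
    exact hx.trans hxy.reachable
  set D : Finset (V × V) := Finset.univ.filter (fun z => z.1 ∈ S ∧ H'.Adj z.1 z.2) with hD
  have hDmem : ∀ z, z ∈ D ↔ z.1 ∈ S ∧ H'.Adj z.1 z.2 := by
    intro z; simp [hD]
  have heven : Even D.card := by
    refine even_card_of_invol D Prod.swap ?_ ?_ ?_
    · intro z hz
      rw [hDmem] at hz ⊢
      exact ⟨hclosed _ _ hz.1 hz.2, hz.2.symm⟩
    · intro z _; exact Prod.swap_swap z
    · intro z hz h
      rw [hDmem] at hz
      have : z.1 = z.2 := by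
        have := congrArg Prod.fst h
        simpa using this.symm
      exact hz.2.ne this
  -- now count D by fibers
  have hfiber : ∀ w ∈ S, (D.filter (fun z => z.1 = w)).card = (H'.neighborSet w).ncard := by
    intro w hw
    rw [Set.ncard_eq_toFinset_card' (H'.neighborSet w)]
    apply Finset.card_bij (fun z _ => z.2)
    · intro z hz
      simp only [Finset.mem_filter] at hz
      obtain ⟨hz1, rfl⟩ := hz
      rw [hDmem] at hz1
      simpa using hz1.2
    · intro z hz z' hz' h
      simp only [Finset.mem_filter] at hz hz'
      exact Prod.ext (hz.2.trans hz'.2.symm) h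
    · intro y hy
      simp only [Set.mem_toFinset, mem_neighborSet] at hy
      exact ⟨(w, y), by simp [Finset.mem_filter, hDmem, hw, hy]⟩
  have hcount : D.card = ∑ w ∈ S, (H'.neighborSet w).ncard := by
    rw [Finset.card_eq_sum_card_fiberwise (f := fun z => z.1) (t := S)]
    · exact Finset.sum_congr rfl hfiber
    · intro z hz; rw [Finset.mem_coe, hDmem] at hz; exact hz.1
  -- degree values
  have hdeg_u : (H'.neighborSet u).ncard = 1 := by
    have : H'.neighborSet u = H.neighborSet u \ {v} := by
      ext x
      simp only [mem_neighborSet, hadj', Set.mem_diff, Set.mem_singleton_iff]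
      constructor
      · rintro ⟨h1, h2⟩
        exact ⟨h1, fun h => h2 (by rw [h])⟩
      · rintro ⟨h1, h2⟩
        exact ⟨h1, fun h => h2 (Sym2.congr_right.mp h)⟩
    have hv' : v ∈ H.neighborSet u := huv
    rw [this, Set.ncard_diff_singleton_of_mem hv', hreg u]
  have hdeg_other : ∀ w ∈ S, w ≠ u → (H'.neighborSet w).ncard = 2 := by
    intro w hw hwu
    have hwv : w ≠ v := fun h => hvS (h ▸ hw)
    have : H'.neighborSet w = H.neighborSet w := by
      ext x
      simp only [mem_neighborSet, hadj']
      refine ⟨fun h => h.1, fun h => ⟨h, fun hc => ?_⟩⟩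
      rw [Sym2.eq_iff] at hc
      rcases hc with ⟨rfl, rfl⟩ | ⟨rfl, rfl⟩
      · exact hwu rfl
      · exact hwv rfl
    rw [this, hreg w]
  have hsum : ∑ w ∈ S, (H'.neighborSet w).ncard = 2 * (S.card - 1) + 1 := by
    rw [← Finset.sum_erase_add _ _ huS, hdeg_u]
    have : ∑ w ∈ S.erase u, (H'.neighborSet w).ncard = ∑ _w ∈ S.erase u, 2 := by
      refine Finset.sum_congr rfl fun w hw => ?_
      exact hdeg_other w (Finset.mem_of_mem_erase hw) (Finset.ne_of_mem_erase hw)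
    rw [this, Finset.sum_const, Finset.card_erase_of_mem huS, smul_eq_mul]
    omega
  rw [hcount, hsum] at heven
  obtain ⟨r, hr⟩ := heven
  omega

/-- Walk version of `nobridge`. -/
lemma nobridge' [Fintype V] (H : SimpleGraph V)
    (hreg : ∀ v, (H.neighborSet v).ncard = 2) {u v : V} (huv : H.Adj u v) :
    ∃ W : H.Walk u v, s(u, v) ∉ W.edges := by
  obtain ⟨W0⟩ := nobridge H hreg huv
  have hsub : ∀ e ∈ W0.edges, e ∈ H.edgeSet := by
    intro e he
    have := W0.edges_subset_edgeSet he
    rw [edgeSet_sdiff] at this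
    exact this.1
  refine ⟨W0.transfer H hsub, ?_⟩
  rw [Walk.edges_transfer]
  intro hmem
  have := W0.adj_of_mem_edges hmem
  simp only [sdiff_adj, fromEdgeSet_adj, Set.mem_singleton_iff, not_and, not_not] at this
  exact huv.ne (this.2 trivial)

/-- Build reachability in `H'` from a walk in `H` whose edges all give `H'`-adjacency. -/
lemma reach_of_edges {H H' : SimpleGraph V} {x y : V} (W : H.Walk x y)
    (h : ∀ v w, s(v, w) ∈ W.edges → H'.Adj v w) : H'.Reachable x y := by
  induction W with
  | nil => exact Reachable.refl _
  | @cons x' y' z' hadj W ih =>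
    refine (h x' y' ?_).reachable.trans (ih fun v w hm => h v w ?_)
    · simp [Walk.edges_cons]
    · simp [Walk.edges_cons, hm]

lemma reach_mono {H H' : SimpleGraph V} (h : ∀ v w, H.Adj v w → H'.Reachable v w)
    {x y : V} (hxy : H.Reachable x y) : H'.Reachable x y := by
  obtain ⟨W⟩ := hxy
  induction W with
  | nil => exact Reachable.refl _
  | cons hadj W ih => exact (h _ _ hadj).trans ih

/-- In a graph where every vertex has exactly two neighbours, the support of a cycle
is closed under adjacency. -/
lemma cycle_support_closed [Fintype V] [DecidableEq V] (H : SimpleGraph V)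
    (hreg : ∀ v, (H.neighborSet v).ncard = 2) {u : V} {c : H.Walk u u}
    (hc : c.IsCycle) {x y : V} (hx : x ∈ c.support) (hxy : H.Adj x y) :
    y ∈ c.support := by
  set c' := c.rotate x hx with hc'def
  have hc' : c'.IsCycle := hc.rotate hx
  have hnil : ¬ c'.Nil := hc'.not_nil
  have hlen3 : 3 ≤ c'.length := hc'.three_le_length
  set y1 := c'.getVert 1 with hy1
  -- decompose c' as cons
  have hcons : c' = Walk.cons (c'.adj_snd hnil) c'.tail := (c'.cons_tail_eq hnil).symm
  have hq : c'.tail.IsPath ∧ s(x, y1) ∉ c'.tail.edges := by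
    rw [← Walk.cons_isCycle_iff]
    rwa [← hcons]
    exact c'.adj_snd hnil
  set q := c'.tail with hqdef
  have hqlen : q.length + 1 = c'.length := Walk.length_tail_add_one hnil
  have hqlen2 : 2 ≤ q.length := by omega
  have hqrnil : ¬ q.reverse.Nil := by
    rw [Walk.not_nil_iff_lt_length, Walk.length_reverse]
    omega
  set y2 := q.reverse.getVert 1 with hy2
  have hadj2 : H.Adj x y2 := q.reverse.adj_snd hqrnil
  have hadj1 : H.Adj x y1 := c'.adj_snd hnil
  -- y1 ≠ y2
  have hne12 : y1 ≠ y2 := by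
    intro h
    have ht : q.reverse.tail.IsPath := (hq.1.reverse).tail
    have : (q.reverse.tail.copy h.symm rfl).IsPath := by
      rwa [Walk.isPath_copy]
    have hnil' : q.reverse.tail.copy h.symm rfl = Walk.nil := by
      rw [← Walk.isPath_iff_eq_nil]
      exact this
    have hlen0 : q.reverse.tail.length = 0 := by
      have := congrArg Walk.length hnil'
      simpa using this
    have := Walk.length_tail_add_one hqrnil
    rw [hlen0, Walk.length_reverse] at this
    omega
  -- the two neighbours
  have hnbr : H.neighborSet x = {y1, y2} := by
    refine (Set.eq_of_subset_of_ncard_le ?_ ?_ (Set.toFinite _)).symm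
    · rintro z (rfl | rfl)
      · exact hadj1
      · exact hadj2
    · rw [hreg x, Set.ncard_pair hne12]
  have hy : y = y1 ∨ y = y2 := by
    have : y ∈ H.neighborSet x := hxy
    rw [hnbr] at this
    simpa using this
  -- memberships in support
  have hy1mem : y1 ∈ c'.support := by
    rw [Walk.mem_support_iff_exists_getVert]
    exact ⟨1, rfl, by omega⟩
  have hy2mem : y2 ∈ c'.support := by
    have h1 : y2 ∈ q.reverse.support := by
      rw [Walk.mem_support_iff_exists_getVert]
      exact ⟨1, rfl, by rw [Walk.length_reverse]; omega⟩
    rw [Walk.support_reverse, List.mem_reverse] at h1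
    have h2 : y2 ∈ c'.support.tail := by
      rwa [← Walk.support_tail_of_not_nil c' hnil]
    exact List.mem_of_mem_tail h2
  have hcsup : c'.support = c.support ∨ True := Or.inr trivial
  have hmemc : ∀ z, z ∈ c'.support → z ∈ c.support := by
    intro z hz
    have := (Walk.mem_verts_toSubgraph c').mpr hz
    rw [hc'def, Walk.toSubgraph_rotate] at this
    exact (Walk.mem_verts_toSubgraph c).mp this
  rcases hy with rfl | rfl
  · exact hmemc _ hy1mem
  · exact hmemc _ hy2mem

/-- A connected finite graph in which every vertex has exactly two neighbours is
Hamiltonian. -/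
lemma ham [Fintype V] [DecidableEq V] (H : SimpleGraph V)
    (hreg : ∀ v, (H.neighborSet v).ncard = 2) (hconn : H.Connected) :
    H.IsHamiltonian := by
  intro _hcard
  obtain ⟨v0⟩ := hconn.nonempty
  have hne : (H.neighborSet v0).Nonempty := by
    apply Set.nonempty_of_ncard_ne_zero
    rw [hreg v0]; omega
  obtain ⟨w, hw⟩ := hne
  have hadj : H.Adj v0 w := hw
  have hreach := nobridge H hreg hadj
  obtain ⟨u, c, hc, _he⟩ :=
    (adj_and_reachable_delete_edges_iff_exists_cycle (G := H)).mp ⟨hadj, hreach⟩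
  -- all vertices are in the support of c
  have hall : ∀ x, x ∈ c.support := by
    intro x
    have hreach' : H.Reachable u x := hconn.preconnected u x
    obtain ⟨P⟩ := hreach'
    have : ∀ {a b : V} (P : H.Walk a b), a ∈ c.support → b ∈ c.support := by
      intro a b P
      induction P with
      | nil => exact id
      | cons hadj P ih => exact fun h => ih (cycle_support_closed H hreg hc h hadj)
    exact this P c.start_mem_support
  refine ⟨u, c, ?_⟩
  rw [Walk.isHamiltonianCycle_iff_isCycle_and_support_count_tail_eq_one]
  refine ⟨hc, fun z => ?_⟩
  have hnodup : c.support.tail.Nodup := hc.2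
  refine List.count_eq_one_of_mem hnodup ?_
  -- z ∈ c.support.tail
  cases c with
  | nil => exact absurd rfl hc.ne_nil
  | cons hadj q =>
    simp only [Walk.support_cons, List.tail_cons]
    rcases eq_or_ne z u with rfl | hzu
    · exact q.end_mem_support
    · have := hall z
      simp only [Walk.support_cons, List.mem_cons] at this
      exact this.resolve_left hzu

/-- The merging lemma: replacing edges `pq`, `rs` (in different components) by
`qr`, `sp` strictly decreases the number of connected components. -/
lemma merge [Fintype V] (H H' : SimpleGraph V)
    (hreg : ∀ v, (H.neighborSet v).ncard = 2)
    (p q r s : V)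
    (hpq : H.Adj p q) (hrs : H.Adj r s)
    (hnr : ¬ H.Reachable p r)
    (hsub : ∀ v w, H.Adj v w → s(v, w) ≠ s(p, q) → s(v, w) ≠ s(r, s) → H'.Adj v w)
    (hqr : H'.Adj q r) (hsp : H'.Adj s p) :
    Nat.card H'.ConnectedComponent < Nat.card H.ConnectedComponent := by
  classical
  -- Claim A : H'.Reachable p q
  have claimA : H'.Reachable p q := by
    obtain ⟨W, hW⟩ := nobridge' H hreg hpq
    have hsupp : ∀ x ∈ W.support, H.Reachable p x := fun x hx => ⟨W.takeUntil x hx⟩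
    have hrs' : s(r, s) ∉ W.edges := by
      intro h
      exact hnr (hsupp r (W.fst_mem_support_of_mem_edges h))
    refine reach_of_edges W fun v w hm => ?_
    refine hsub v w (W.adj_of_mem_edges hm) ?_ ?_
    · intro h; rw [h] at hm; exact hW hm
    · intro h; rw [h] at hm; exact hrs' hm
  -- Claim B : H'.Reachable r s
  have claimB : H'.Reachable r s := by
    obtain ⟨W, hW⟩ := nobridge' H hreg hrs
    have hsupp : ∀ x ∈ W.support, H.Reachable r x := fun x hx => ⟨W.takeUntil x hx⟩
    have hpq' : s(p, q) ∉ W.edges := by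
      intro h
      exact hnr (hsupp p (W.fst_mem_support_of_mem_edges h)).symm
    refine reach_of_edges W fun v w hm => ?_
    refine hsub v w (W.adj_of_mem_edges hm) ?_ ?_
    · intro h; rw [h] at hm; exact hpq' hm
    · intro h; rw [h] at hm; exact hW hm
  -- key : every H-edge has H'-reachable endpoints
  have key : ∀ v w, H.Adj v w → H'.Reachable v w := by
    intro v w hvw
    by_cases h1 : s(v, w) = s(p, q)
    · rw [Sym2.eq_iff] at h1
      rcases h1 with ⟨rfl, rfl⟩ | ⟨rfl, rfl⟩
      · exact claimA
      · exact claimA.symm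
    · by_cases h2 : s(v, w) = s(r, s)
      · rw [Sym2.eq_iff] at h2
        rcases h2 with ⟨rfl, rfl⟩ | ⟨rfl, rfl⟩
        · exact claimB
        · exact claimB.symm
      · exact (hsub v w hvw h1 h2).reachable
  -- the component map
  have hlift : ∀ (v w : V) (P : H.Walk v w), P.IsPath →
      H'.connectedComponentMk v = H'.connectedComponentMk w := by
    intro v w P _
    exact ConnectedComponent.eq.mpr (reach_mono key ⟨P⟩)
  set φ : H.ConnectedComponent → H'.ConnectedComponent :=
    ConnectedComponent.lift (fun v => H'.connectedComponentMk v) hlift with hφ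
  have hsurj : Function.Surjective φ := by
    intro c
    obtain ⟨v, rfl⟩ := c.exists_rep
    exact ⟨H.connectedComponentMk v, rfl⟩
  have hninj : ¬ Function.Injective φ := by
    intro hinj
    have h1 : φ (H.connectedComponentMk q) = φ (H.connectedComponentMk r) := by
      simp only [hφ, ConnectedComponent.lift_mk]
      exact ConnectedComponent.eq.mpr hqr.reachable
    have h2 := hinj h1
    rw [ConnectedComponent.eq] at h2
    exact hnr (hpq.reachable.trans h2)
  haveI : Finite H.ConnectedComponent := Quot.finite _
  haveI : Finite H'.ConnectedComponent := Quot.finite _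
  haveI f1 : Fintype H.ConnectedComponent := Fintype.ofFinite _
  haveI f2 : Fintype H'.ConnectedComponent := Fintype.ofFinite _
  rw [Nat.card_eq_fintype_card, Nat.card_eq_fintype_card]
  exact Fintype.card_lt_of_surjective_not_injective φ hsurj hninj

end LemmaTwoAux

open LemmaTwoAux in
/-- **Lemma 2 setup.**  `G` is the edge-disjoint union of the four-cycles
`(a i) (b i) (c i) (d i)`, `i = 1, …, k`, and the edge set `E`; `cyc i` is the edge
set of the `i`-th four-cycle, and `half f i` is the pair of opposite edges of the
`i`-th four-cycle kept by the halving choice `f i`. -/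
theorem lemma_two {V : Type*} [Fintype V] [DecidableEq V] (G : SimpleGraph V) (k : ℕ)
    (a b c d : Fin k → V) (E : Set (Sym2 V))
    (cyc : Fin k → Set (Sym2 V))
    (hcyc : ∀ i, cyc i = {s(a i, b i), s(b i, c i), s(c i, d i), s(d i, a i)})
    (half : (Fin k → Bool) → Fin k → Set (Sym2 V))
    (hhalf : ∀ f i, half f i =
      if f i then {s(a i, b i), s(c i, d i)} else {s(b i, c i), s(d i, a i)})
    (hdist : ∀ i, a i ≠ b i ∧ a i ≠ c i ∧ a i ≠ d i ∧
      b i ≠ c i ∧ b i ≠ d i ∧ c i ≠ d i)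
    (hunion : G.edgeSet = E ∪ ⋃ i, cyc i)
    (hEC : ∀ i, Disjoint E (cyc i))
    (hCC : ∀ i j, i ≠ j → Disjoint (cyc i) (cyc j))
    (htwofactor : ∀ f : Fin k → Bool, ∀ v : V,
      {w | s(v, w) ∈ E ∪ ⋃ i, half f i}.ncard = 2)
    (hconn : G.Connected) :
    G.IsHamiltonian := by
  classical
  set N : (Fin k → Bool) → Set (Sym2 V) := fun f => E ∪ ⋃ i, half f i with hN
  set HH : (Fin k → Bool) → SimpleGraph V := fun f => fromEdgeSet (N f) with hHH
  have hNG : ∀ f, N f ⊆ G.edgeSet := by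
    intro f e he
    rw [hunion]
    rcases he with hE | hU
    · exact Or.inl hE
    · obtain ⟨i, hi⟩ := Set.mem_iUnion.mp hU
      refine Or.inr (Set.mem_iUnion.mpr ⟨i, ?_⟩)
      rw [hcyc]
      rw [hhalf] at hi
      rcases hfi : f i with _ | _ <;>
        simp only [hfi, if_true, Bool.false_eq_true, if_false,
          Set.mem_insert_iff, Set.mem_singleton_iff] at hi <;>
        simp only [Set.mem_insert_iff, Set.mem_singleton_iff] <;> tauto
  have hAdjIff : ∀ f v w, (HH f).Adj v w ↔ s(v, w) ∈ N f := by
    intro f v w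
    rw [hHH]
    simp only [fromEdgeSet_adj]
    refine ⟨fun h => h.1, fun h => ⟨h, ?_⟩⟩
    have := hNG f h
    rw [mem_edgeSet] at this
    exact this.ne
  have hreg : ∀ f v, ((HH f).neighborSet v).ncard = 2 := by
    intro f v
    have : (HH f).neighborSet v = {w | s(v, w) ∈ N f} := by
      ext w; rw [mem_neighborSet, hAdjIff]; rfl
    rw [this, hN]
    exact htwofactor f v
  have hle : ∀ f, HH f ≤ G := by
    intro f
    rw [hHH]
    have := fromEdgeSet_mono (hNG f)
    rwa [fromEdgeSet_edgeSet] at this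
  have hAdjOf : ∀ f (i : Fin k) v w, s(v, w) ∈ half f i → (HH f).Adj v w := by
    intro f i v w h
    exact (hAdjIff f v w).mpr (Or.inr (Set.mem_iUnion.mpr ⟨i, h⟩))
  -- choose a minimizing halving
  obtain ⟨f₀, -, hmin⟩ := Finset.exists_min_image (Finset.univ : Finset (Fin k → Bool))
    (fun f => Nat.card (HH f).ConnectedComponent) ⟨fun _ => true, Finset.mem_univ _⟩
  by_cases hC : (HH f₀).Connected
  · exact (ham (HH f₀) (hreg f₀) hC).mono (hle f₀)
  · exfalso
    -- there is a G-edge whose endpoints are not HH f₀ - reachable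
    have hcross : ∃ v w, G.Adj v w ∧ ¬ (HH f₀).Reachable v w := by
      by_contra hno
      push_neg at hno
      apply hC
      rw [connected_iff]
      exact ⟨fun x y => reach_mono hno (hconn.preconnected x y), hconn.nonempty⟩
    obtain ⟨v, w, hvwG, hnR⟩ := hcross
    have hEdge : s(v, w) ∈ E ∪ ⋃ i, cyc i := by
      rw [← hunion]; exact hvwG
    have hnotN : s(v, w) ∉ N f₀ := fun h => hnR ((hAdjIff f₀ v w).mpr h).reachable
    rcases hEdge with hE | hU
    · exact hnotN (Or.inl hE)
    obtain ⟨i, hi⟩ := Set.mem_iUnion.mp hU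
    rw [hcyc] at hi
    have hnothalf : s(v, w) ∉ half f₀ i := fun h => hnR (hAdjOf f₀ i v w h).reachable
    -- the generic subset lemma
    have hsubgen : ∀ (bb : Bool) v' w', (HH f₀).Adj v' w' →
        (∀ e ∈ half f₀ i, s(v', w') ≠ e) →
        (HH (Function.update f₀ i bb)).Adj v' w' := by
      intro bb v' w' hvw hne
      rw [hAdjIff] at hvw ⊢
      rcases hvw with hE | hU'
      · exact Or.inl hE
      · obtain ⟨j, hj⟩ := Set.mem_iUnion.mp hU'
        rcases eq_or_ne j i with rfl | hji
        · exact absurd rfl (hne _ hj)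
        · refine Or.inr (Set.mem_iUnion.mpr ⟨j, ?_⟩)
          rw [hhalf, Function.update_of_ne hji, ← hhalf]
          exact hj
    -- the contradiction machine
    have main : ∀ (f₁ : Fin k → Bool) (p q r s : V),
        (HH f₀).Adj p q → (HH f₀).Adj r s → ¬ (HH f₀).Reachable p r →
        (HH f₁).Adj q r → (HH f₁).Adj s p →
        (∀ v' w', (HH f₀).Adj v' w' → s(v', w') ≠ s(p, q) → s(v', w') ≠ s(r, s) →
          (HH f₁).Adj v' w') → False := by
      intro f₁ p q r s h1 h2 h3 h4 h5 h6
      exact absurd (merge (HH f₀) (HH f₁) (hreg f₀) p q r s h1 h2 h3 h6 h4 h5)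
        (not_lt.mpr (hmin f₁ (Finset.mem_univ _)))
    cases hfi : f₀ i with
    | true =>
      -- kept : ab, cd ; dropped : bc, da
      have hhalfi : half f₀ i = {s(a i, b i), s(c i, d i)} := by rw [hhalf, hfi]; simp
      have hhalfi' : half (Function.update f₀ i false) i = {s(b i, c i), s(d i, a i)} := by
        rw [hhalf, Function.update_self]; simp
      have hab : (HH f₀).Adj (a i) (b i) := hAdjOf f₀ i _ _ (by rw [hhalfi]; left; rfl)
      have hcd : (HH f₀).Adj (c i) (d i) := hAdjOf f₀ i _ _ (by rw [hhalfi]; right; rfl)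
      have hbc' : (HH (Function.update f₀ i false)).Adj (b i) (c i) :=
        hAdjOf _ i _ _ (by rw [hhalfi']; left; rfl)
      have hda' : (HH (Function.update f₀ i false)).Adj (d i) (a i) :=
        hAdjOf _ i _ _ (by rw [hhalfi']; right; rfl)
      rw [hhalfi] at hnothalf
      simp only [Set.mem_insert_iff, Set.mem_singleton_iff] at hi hnothalf
      push_neg at hnothalf
      rcases hi with h | h | h | h
      · exact hnothalf.1 h
      · -- dropped edge bc crosses
        have hbc : ¬ (HH f₀).Reachable (b i) (c i) := by
          rw [Sym2.eq_iff] at h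
          rcases h with ⟨rfl, rfl⟩ | ⟨rfl, rfl⟩
          · exact hnR
          · exact fun hh => hnR hh.symm
        refine main (Function.update f₀ i false) (a i) (b i) (c i) (d i) hab hcd ?_ hbc' hda' ?_
        · exact fun hh => hbc (hab.reachable.symm.trans hh)
        · intro v' w' h1 h2 h3
          refine hsubgen false v' w' h1 ?_
          rw [hhalfi]
          rintro e (rfl | rfl)
          · exact h2
          · exact h3
      · exact hnothalf.2 h
      · -- dropped edge da crosses
        have hda : ¬ (HH f₀).Reachable (d i) (a i) := by
          rw [Sym2.eq_iff] at h
          rcases h with ⟨rfl, rfl⟩ | ⟨rfl, rfl⟩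
          · exact hnR
          · exact fun hh => hnR hh.symm
        refine main (Function.update f₀ i false) (c i) (d i) (a i) (b i) hcd hab ?_ hda' hbc' ?_
        · exact fun hh => hda (hcd.reachable.symm.trans hh)
        · intro v' w' h1 h2 h3
          refine hsubgen false v' w' h1 ?_
          rw [hhalfi]
          rintro e (rfl | rfl)
          · exact h3
          · exact h2
    | false =>
      -- kept : bc, da ; dropped : ab, cd
      have hhalfi : half f₀ i = {s(b i, c i), s(d i, a i)} := by rw [hhalf, hfi]; simp
      have hhalfi' : half (Function.update f₀ i true) i = {s(a i, b i), s(c i, d i)} := by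
        rw [hhalf, Function.update_self]; simp
      have hbc : (HH f₀).Adj (b i) (c i) := hAdjOf f₀ i _ _ (by rw [hhalfi]; left; rfl)
      have hda : (HH f₀).Adj (d i) (a i) := hAdjOf f₀ i _ _ (by rw [hhalfi]; right; rfl)
      have hab' : (HH (Function.update f₀ i true)).Adj (a i) (b i) :=
        hAdjOf _ i _ _ (by rw [hhalfi']; left; rfl)
      have hcd' : (HH (Function.update f₀ i true)).Adj (c i) (d i) :=
        hAdjOf _ i _ _ (by rw [hhalfi']; right; rfl)
      rw [hhalfi] at hnothalf
      simp only [Set.mem_insert_iff, Set.mem_singleton_iff] at hi hnothalf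
      push_neg at hnothalf
      rcases hi with h | h | h | h
      · -- dropped edge ab crosses
        have habn : ¬ (HH f₀).Reachable (a i) (b i) := by
          rw [Sym2.eq_iff] at h
          rcases h with ⟨rfl, rfl⟩ | ⟨rfl, rfl⟩
          · exact hnR
          · exact fun hh => hnR hh.symm
        refine main (Function.update f₀ i true) (d i) (a i) (b i) (c i) hda hbc ?_ hab' hcd' ?_
        · exact fun hh => habn (hda.reachable.symm.trans hh)
        · intro v' w' h1 h2 h3
          refine hsubgen true v' w' h1 ?_
          rw [hhalfi]
          rintro e (rfl | rfl)
          · exact h3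
          · exact h2
      · exact hnothalf.1 h
      · -- dropped edge cd crosses
        have hcdn : ¬ (HH f₀).Reachable (c i) (d i) := by
          rw [Sym2.eq_iff] at h
          rcases h with ⟨rfl, rfl⟩ | ⟨rfl, rfl⟩
          · exact hnR
          · exact fun hh => hnR hh.symm
        refine main (Function.update f₀ i true) (b i) (c i) (d i) (a i) hbc hda ?_ hcd' hab' ?_
        · exact fun hh => hcdn (hbc.reachable.symm.trans hh)
        · intro v' w' h1 h2 h3
          refine hsubgen true v' w' h1 ?_
          rw [hhalfi]
          rintro e (rfl | rfl)
          · exact h2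
          · exact h3
      · exact hnothalf.2 h
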